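/- Let I be a finite set of facts with key-equal groups 𝒢, and for each potential answer index l ∈ {1,...,N} let 𝒲^l be a family of subsets of I (the minimal witnesses of q[a_l]). Introduce variables x_i for facts and p_l for potential answers, and let φ = (⋀_{G∈𝒢} ⋁_{f_i∈G} x_i) ∧ (⋀_{l=1}^{N} ⋀_{W∈𝒲^l} ((⋁_{f_i∈W} ¬x_i) ∨ ¬p_l)). Then for each l, there exists a satisfying assignment of φ setting p_l to true if and only if a_l is not a consistent answer, i.e., there exists a repair J of I such that no W ∈ 𝒲^l is a subset of J. -/
import Mathlib


/-- Non-boolean SAT reduction: for each potential answer index `l`, the CNF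
formula `φ` has a satisfying assignment setting `p l` to true iff there is a
repair of `I` containing no minimal witness of `q[a_l]`, i.e. iff `a_l` is not
a consistent answer. -/
theorem stmt_4 {α : Type*} [DecidableEq α]
    (I : Finset α) (𝒢 : Finset (Finset α)) (N : ℕ)
    (𝒲 : Fin N → Finset (Finset α))
    (hne : ∀ G ∈ 𝒢, G.Nonempty) (hsub : ∀ G ∈ 𝒢, G ⊆ I)
    (hdisj : ∀ G ∈ 𝒢, ∀ G' ∈ 𝒢, G ≠ G' → Disjoint G G')
    (hcover : ∀ f ∈ I, ∃ G ∈ 𝒢, f ∈ G)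
    (hW : ∀ l : Fin N, ∀ W ∈ 𝒲 l, W ⊆ I ∧ W.Nonempty)
    (l : Fin N) :
    (∃ (a : α → Bool) (p : Fin N → Bool),
        ((∀ G ∈ 𝒢, ∃ f ∈ G, a f = true) ∧
          (∀ l' : Fin N, ∀ W ∈ 𝒲 l', (∃ f ∈ W, a f = false) ∨ p l' = false)) ∧
        p l = true) ↔
    (∃ J : Finset α, J ⊆ I ∧ (∀ G ∈ 𝒢, (J ∩ G).card = 1) ∧
        ∀ W ∈ 𝒲 l, ¬ W ⊆ J) := by
  constructor
  · rintro ⟨a, p, ⟨h1, h2⟩, hpl⟩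
    -- choose one true fact from each group
    choose f hf ha using h1
    refine ⟨𝒢.attach.image (fun G => f G.1 G.2), ?_, ?_, ?_⟩
    · intro x hx
      simp only [Finset.mem_image, Finset.mem_attach, true_and] at hx
      obtain ⟨G, hG⟩ := hx
      exact hsub G.1 G.2 (hG ▸ hf G.1 G.2)
    · intro G hG
      have : 𝒢.attach.image (fun G => f G.1 G.2) ∩ G = {f G hG} := by
        apply Finset.Subset.antisymm
        · intro x hx
          simp only [Finset.mem_inter, Finset.mem_image, Finset.mem_attach,
            true_and, Finset.mem_singleton] at hx ⊢
          obtain ⟨⟨G', hG'⟩, hxG⟩ := hx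
          by_cases hGG : G'.1 = G
          · subst hG'
            congr 1
          · exact absurd ((hdisj G'.1 G'.2 G hG hGG).le_bot
              (Finset.mem_inter.mpr ⟨hG' ▸ hf G'.1 G'.2, hxG⟩)) (by simp)
        · intro x hx
          simp only [Finset.mem_singleton] at hx
          subst hx
          refine Finset.mem_inter.mpr ⟨Finset.mem_image.mpr ⟨⟨G, hG⟩, Finset.mem_attach _ _, rfl⟩, hf G hG⟩
      rw [this, Finset.card_singleton]
    · intro W hWl hWsub
      rcases h2 l W hWl with ⟨g, hgW, hga⟩ | hpf
      · have := hWsub hgW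
        simp only [Finset.mem_image, Finset.mem_attach, true_and] at this
        obtain ⟨G, hG⟩ := this
        rw [← hG] at hga
        rw [ha G.1 G.2] at hga
        exact absurd hga (by simp)
      · rw [hpf] at hpl; exact absurd hpl (by simp)
  · rintro ⟨J, hJI, hJG, hJW⟩
    refine ⟨fun x => decide (x ∈ J), fun l' => decide (l' = l), ⟨?_, ?_⟩, by simp⟩
    · intro G hG
      have := hJG G hG
      have hne' : (J ∩ G).Nonempty := Finset.card_pos.mp (by omega)
      obtain ⟨x, hx⟩ := hne'
      rw [Finset.mem_inter] at hx
      exact ⟨x, hx.2, by simp [hx.1]⟩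
    · intro l' W hWl'
      by_cases hl : l' = l
      · subst hl
        left
        have := hJW W hWl'
        rw [Finset.not_subset] at this
        obtain ⟨x, hxW, hxJ⟩ := this
        exact ⟨x, hxW, by simp [hxJ]⟩
      · right; simp [hl]
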